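/- Let φ be a convex Φ-function satisfying (aInc)_p and (aDec)_q with 1 < p ≤ q. Then there exist constants 0 < c ≤ C depending only on p, q (and the almost-monotonicity constant L) such that for all s > 0: c·φ(s) ≤ φ̃(φ(s)/s) ≤ C·φ(s), where φ̃ is the Young conjugate of φ. -/

import Mathlib

/-- The (real-valued) Young conjugate `φ̃(t) = sup { r·t − φ(r) : r ≥ 0 }`. -/
noncomputable def conjFn (φ : ℝ → ℝ) (t : ℝ) : ℝ :=
  sSup {y : ℝ | ∃ r : ℝ, 0 ≤ r ∧ y = r * t - φ r}

/-- Let `φ` be a convex Φ-function satisfying (aInc)_p and (aDec)_q with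
`1 < p ≤ q`. Then there exist constants `0 < c ≤ C` (depending only on `p, q, L`)
such that for all `s > 0`: `c·φ(s) ≤ φ̃(φ(s)/s) ≤ C·φ(s)`. -/
theorem stmt5 (φ : ℝ → ℝ) (p q L : ℝ) (hp : 1 < p) (hpq : p ≤ q) (hL : 1 ≤ L)
    (hφ0 : φ 0 = 0) (hφnn : ∀ s : ℝ, 0 ≤ s → 0 ≤ φ s)
    (hconv : ConvexOn ℝ (Set.Ici (0 : ℝ)) φ)
    (hmono : ∀ s t : ℝ, 0 ≤ s → s ≤ t → φ s ≤ φ t)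
    (haInc : ∀ s t : ℝ, 0 < s → s ≤ t → φ s / s ^ p ≤ L * (φ t / t ^ p))
    (haDec : ∀ s t : ℝ, 0 < t → t ≤ s → L * (φ s / s ^ q) ≤ φ t / t ^ q) :
    ∃ c C : ℝ, 0 < c ∧ c ≤ C ∧ ∀ s : ℝ, 0 < s →
      c * φ s ≤ conjFn φ (φ s / s) ∧ conjFn φ (φ s / s) ≤ C * φ s := by
  have hp1 : 0 < p - 1 := by linarith
  have h2L : (1:ℝ) ≤ 2 * L := by linarith
  have h2L0 : (0:ℝ) < 2 * L := by linarith
  set C : ℝ := (2 * L) ^ ((1:ℝ) / (p - 1)) with hCdef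
  have hCpos : 0 < C := Real.rpow_pos_of_pos h2L0 _
  have hC1 : 1 ≤ C := Real.one_le_rpow h2L (by positivity)
  have hCpow : C ^ (p - 1) = 2 * L := by
    rw [hCdef, ← Real.rpow_mul h2L0.le, one_div,
      inv_mul_cancel₀ (ne_of_gt hp1), Real.rpow_one]
  set u : ℝ := C⁻¹ with hudef
  have hupos : 0 < u := inv_pos.2 hCpos
  have hu1 : u ≤ 1 := inv_le_one_of_one_le₀ hC1
  have hupow : u ^ (p - 1) = (2 * L)⁻¹ := by
    rw [hudef, Real.inv_rpow hCpos.le, hCpow]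
  refine ⟨u / 2, C, by positivity, by linarith, ?_⟩
  intro s hs
  have hφs : 0 ≤ φ s := hφnn s hs.le
  set t : ℝ := φ s / s with htdef
  have htnn : 0 ≤ t := div_nonneg hφs hs.le
  have hst : s * t = φ s := by rw [htdef]; field_simp
  have hsp : (0:ℝ) < s ^ p := Real.rpow_pos_of_pos hs p
  -- pointwise upper bound
  have hub : ∀ r : ℝ, 0 ≤ r → r * t - φ r ≤ C * φ s := by
    intro r hr
    rcases le_or_gt r (C * s) with h | h
    · have h1 : r * t ≤ (C * s) * t := mul_le_mul_of_nonneg_right h htnn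
      have h2 : (C * s) * t = C * φ s := by rw [mul_assoc, hst]
      have := hφnn r hr
      linarith
    · have hrpos : 0 < r := lt_of_le_of_lt (by positivity) h
      have hsr : s ≤ r := by nlinarith
      have hinc := haInc s r hs hsr
      have hrp : (0:ℝ) < r ^ p := Real.rpow_pos_of_pos hrpos p
      have h1 : φ s * r ^ p ≤ (L * φ r) * s ^ p := by
        rw [← mul_div_assoc] at hinc
        exact (div_le_div_iff₀ hsp hrp).mp hinc
      -- (r/s)^(p-1) ≥ 2L
      have hrs : C ≤ r / s := (le_div_iff₀ hs).mpr (by linarith)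
      have h2 : 2 * L ≤ (r / s) ^ (p - 1) := by
        rw [← hCpow]
        exact Real.rpow_le_rpow hCpos.le hrs hp1.le
      have h3 : (r / s) ^ p = (r / s) ^ (p - 1) * (r / s) := by
        rw [← Real.rpow_add_one (by positivity : (r:ℝ)/s ≠ 0)]
        ring_nf
      have h4 : r ^ p = (r / s) ^ p * s ^ p := by
        rw [Real.div_rpow hrpos.le hs.le]
        field_simp
      have hrsnn : (0:ℝ) ≤ r / s := by positivity
      have h5 : 2 * L * (r / s) * s ^ p ≤ r ^ p := by
        rw [h4, h3]
        have := mul_le_mul_of_nonneg_right h2 hrsnn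
        nlinarith
      have h6 : φ s * (2 * L * (r / s) * s ^ p) ≤ φ s * r ^ p :=
        mul_le_mul_of_nonneg_left h5 hφs
      have heq : φ s * (2 * L * (r / s) * s ^ p) = 2 * L * (r * t) * s ^ p := by
        rw [htdef]; ring
      have h7 : 2 * L * (r * t) * s ^ p ≤ L * φ r * s ^ p := by
        rw [← heq]; linarith
      have h8 : 2 * (r * t) ≤ φ r := by
        have hpos : (0:ℝ) < L * s ^ p := by
          have hL0 : (0:ℝ) < L := by linarith
          exact mul_pos hL0 hsp
        have e1 : 2 * L * (r * t) * s ^ p = (2 * (r * t)) * (L * s ^ p) := by ring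
        have e2 : L * φ r * s ^ p = φ r * (L * s ^ p) := by ring
        refine le_of_mul_le_mul_right ?_ hpos
        rw [← e1, ← e2]; exact h7
      have hrt : 0 ≤ r * t := mul_nonneg hr htnn
      have hC : 0 ≤ C * φ s := mul_nonneg hCpos.le hφs
      linarith
  set S : Set ℝ := {y : ℝ | ∃ r : ℝ, 0 ≤ r ∧ y = r * t - φ r} with hSdef
  have hSne : S.Nonempty := ⟨0 * t - φ 0, 0, le_refl 0, rfl⟩
  have hSbdd : BddAbove S := by
    refine ⟨C * φ s, ?_⟩
    rintro y ⟨r, hr, rfl⟩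
    exact hub r hr
  have hconj : conjFn φ t = sSup S := rfl
  constructor
  · -- lower bound via r = u * s
    have huspos : 0 < u * s := mul_pos hupos hs
    have hinc := haInc (u * s) s huspos (by nlinarith)
    have husp : (0:ℝ) < (u * s) ^ p := Real.rpow_pos_of_pos huspos p
    have hφus : φ (u * s) ≤ (u / 2) * φ s := by
      have h1 : φ (u * s) ≤ L * (φ s / s ^ p) * (u * s) ^ p :=
        (div_le_iff₀ husp).mp hinc
      have h2 : (u * s) ^ p = u ^ p * s ^ p := Real.mul_rpow hupos.le hs.le
      have h3 : u ^ p = (2 * L)⁻¹ * u := by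
        rw [← hupow, ← Real.rpow_add_one (ne_of_gt hupos)]
        ring_nf
      have h4 : L * (φ s / s ^ p) * (u * s) ^ p = (u / 2) * φ s := by
        rw [h2, h3]
        field_simp
      linarith
    have hmem : u * s * t - φ (u * s) ∈ S := ⟨u * s, huspos.le, rfl⟩
    have hle := le_csSup hSbdd hmem
    have hust : u * s * t = u * φ s := by rw [mul_assoc, hst]
    rw [hconj]
    rw [hust] at hle
    have e3 : u * φ s - (u / 2) * φ s = (u / 2) * φ s := by ring
    linarith
  · rw [hconj]
    apply csSup_le hSne
    rintro y ⟨r, hr, rfl⟩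
    exact hub r hr
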